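/- Fix N ≥ 1. For 1 ≤ i ≤ N let α_i, β_i : [0,∞) → [0,∞) and g_i > 0 satisfy β_i(y) ≤ g_i α_i(y) for all y ≥ 0; let W_{i→j} ≥ 0 with W_{i→i} = 0; let F^i be probability measures on [0,∞) with finite first moment μ_i = ∫ y dF^i(y). Define the reproduction matrix H by H_{ij} = W_{j→i} g_i for i ≠ j and H_{ii} = g_i μ_i. Suppose κ_1, …, κ_N > 0 and ρ ≥ 0 satisfy Σ_j κ_j H_{ji} = ρ κ_i for all i, and set m_i = κ_i g_i. Then for every x ∈ [0,∞)^N: −Σ_i α_i(x_i) m_i + Σ_i β_i(x_i) ( m_i μ_i + Σ_{j≠i} W_{i→j} m_j ) − Σ_i β_i(x_i) x_i m_i ≤ −Σ_i κ_i ( g_i α_i(x_i) − ρ β_i(x_i) ). -/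
import Mathlib


open MeasureTheory

/-- Foster–Lyapunov bound: with `m_i = κ_i g_i` where `(κ, ρ)` is a positive left
eigenvector–eigenvalue pair of the reproduction matrix `H` (`H_{ij} = W_{j→i} g_i` for
`i ≠ j`, `H_{ii} = g_i μ_i`), the generator applied to `V(x) = Σ m_i x_i` satisfies
`G^N V(x) ≤ -Σ_i κ_i (g_i α_i(x_i) - ρ β_i(x_i))` on `[0,∞)^N`. -/
theorem generator_lyapunov_bound
    (N : ℕ) (hN : 1 ≤ N)
    (α β : Fin N → ℝ → ℝ)
    (hα : ∀ i, ∀ y : ℝ, 0 ≤ y → 0 ≤ α i y)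
    (hβ : ∀ i, ∀ y : ℝ, 0 ≤ y → 0 ≤ β i y)
    (g : Fin N → ℝ) (hg : ∀ i, 0 < g i)
    (hβα : ∀ i, ∀ y : ℝ, 0 ≤ y → β i y ≤ g i * α i y)
    (W : Fin N → Fin N → ℝ) (hW : ∀ i j, 0 ≤ W i j) (hWdiag : ∀ i, W i i = 0)
    (F : Fin N → Measure ℝ)
    (hFp : ∀ i, IsProbabilityMeasure (F i))
    (hFsupp : ∀ i, F i (Set.Iio 0) = 0)
    (hFmom : ∀ i, Integrable (fun y : ℝ => y) (F i))
    (μ : Fin N → ℝ) (hμ : ∀ i, μ i = ∫ y, y ∂(F i))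
    (H : Fin N → Fin N → ℝ)
    (hH : ∀ i j, H i j = if i = j then g i * μ i else W j i * g i)
    (κ : Fin N → ℝ) (hκ : ∀ i, 0 < κ i)
    (ρ : ℝ) (hρ : 0 ≤ ρ)
    (heig : ∀ i, ∑ j, κ j * H j i = ρ * κ i)
    (m : Fin N → ℝ) (hm : ∀ i, m i = κ i * g i)
    (x : Fin N → ℝ) (hx : ∀ i, 0 ≤ x i) :
    -∑ i, α i (x i) * m i
      + ∑ i, β i (x i) * (m i * μ i + ∑ j ∈ Finset.univ.erase i, W i j * m j)
      - ∑ i, β i (x i) * x i * m i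
    ≤ -∑ i, κ i * (g i * α i (x i) - ρ * β i (x i)) := by
  have key : ∀ i, m i * μ i + ∑ j ∈ Finset.univ.erase i, W i j * m j = ρ * κ i := by
    intro i
    rw [← heig i, ← Finset.add_sum_erase _ _ (Finset.mem_univ i)]
    congr 1
    · rw [hH i i, if_pos rfl, hm]; ring
    · apply Finset.sum_congr rfl
      intro j hj
      have hji : j ≠ i := (Finset.mem_erase.mp hj).1
      rw [hH j i, if_neg hji, hm]; ring
  have h2 : ∑ i, β i (x i) * (m i * μ i + ∑ j ∈ Finset.univ.erase i, W i j * m j)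
      = ∑ i, β i (x i) * (ρ * κ i) := by
    apply Finset.sum_congr rfl; intro i _; rw [key i]
  rw [h2]
  have h3 : 0 ≤ ∑ i, β i (x i) * x i * m i := by
    apply Finset.sum_nonneg; intro i _
    have h1 := hβ i (x i) (hx i)
    have h2 := hx i
    have h3 : 0 ≤ m i := by rw [hm]; exact mul_nonneg (hκ i).le (hg i).le
    exact mul_nonneg (mul_nonneg h1 h2) h3
  have h4 : ∀ i, α i (x i) * m i = κ i * (g i * α i (x i)) := by
    intro i; rw [hm]; ring
  simp only [h4, mul_sub, Finset.sum_sub_distrib, neg_sub]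
  have : ∑ i, β i (x i) * (ρ * κ i) = ∑ i, κ i * (ρ * β i (x i)) := by
    apply Finset.sum_congr rfl; intro i _; ring
  rw [this]
  linarith
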